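/- Let N(X) = tr_E[V X V*] be a completely positive unital map B(H) → B(K) (so tr_E[VV*] = I_K), X = X* ∈ B(H), and Y = Y* ∈ B(K) such that (Y ⊗ I_E) V = V X. Then Y = N(X), N(X^2) = N(X)^2, and Y ⊗ I_E commutes with V V*. -/
import Mathlib


open Matrix BigOperators
open scoped Kronecker ComplexOrder

noncomputable section

namespace BSQMC

variable {H K E : Type*} [Fintype H] [DecidableEq H] [Fintype K] [DecidableEq K]
  [Fintype E] [DecidableEq E]

/-- Partial trace over the environment `E`. -/
def ptE (M : Matrix (K × E) (K × E) ℂ) : Matrix K K ℂ :=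
  Matrix.of fun k k' => ∑ e : E, M (k, e) (k', e)

/-- The map `N(X) = tr_E [V X V*]`. -/
def Nmap (V : Matrix (K × E) H ℂ) (X : Matrix H H ℂ) : Matrix K K ℂ :=
  ptE (V * X * Vᴴ)

lemma ptE_kron_mul (Y : Matrix K K ℂ) (M : Matrix (K × E) (K × E) ℂ) :
    ptE ((Y ⊗ₖ (1 : Matrix E E ℂ)) * M) = Y * ptE M := by
  ext k k'
  simp only [ptE, Matrix.mul_apply, Matrix.of_apply, Fintype.sum_prod_type,
    Matrix.kroneckerMap_apply, Matrix.one_apply]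
  rw [Finset.sum_comm]
  refine Finset.sum_congr rfl fun j _ => ?_
  simp [mul_ite, Finset.mul_sum, Finset.sum_comm (γ := E)]

theorem intertwining_implies_multiplicative
    (V : Matrix (K × E) H ℂ)
    (hunital : ptE (V * Vᴴ) = 1)
    (X : Matrix H H ℂ) (hX : Xᴴ = X)
    (Y : Matrix K K ℂ) (hY : Yᴴ = Y)
    (hint : (Y ⊗ₖ (1 : Matrix E E ℂ)) * V = V * X) :
    Y = Nmap V X ∧ Nmap V (X * X) = Nmap V X * Nmap V X ∧
      Commute (Y ⊗ₖ (1 : Matrix E E ℂ)) (V * Vᴴ) := by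
  have hkronH : (Y ⊗ₖ (1 : Matrix E E ℂ))ᴴ = Y ⊗ₖ (1 : Matrix E E ℂ) := by
    ext ⟨k, e⟩ ⟨k', e'⟩
    simp only [Matrix.conjTranspose_apply, Matrix.kroneckerMap_apply, Matrix.one_apply]
    have : (starRingEnd ℂ) (Y k' k) = Y k k' := by
      have h2 := congrFun (congrFun hY k) k'
      simpa [Matrix.conjTranspose_apply] using h2
    by_cases h : e = e' <;> simp [h, eq_comm, this]
  have hint' : Vᴴ * (Y ⊗ₖ (1 : Matrix E E ℂ)) = X * Vᴴ := by
    have := congrArg Matrix.conjTranspose hint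
    simpa [Matrix.conjTranspose_mul, hkronH, hX] using this
  have h1 : Y = Nmap V X := by
    have : Nmap V X = ptE ((Y ⊗ₖ (1 : Matrix E E ℂ)) * (V * Vᴴ)) := by
      rw [← Matrix.mul_assoc, hint, Nmap, Matrix.mul_assoc]
    rw [this, ptE_kron_mul, hunital, Matrix.mul_one]
  have hcomm : Commute (Y ⊗ₖ (1 : Matrix E E ℂ)) (V * Vᴴ) := by
    unfold Commute SemiconjBy
    rw [← Matrix.mul_assoc, hint, Matrix.mul_assoc, Matrix.mul_assoc, hint']
  refine ⟨h1, ?_, hcomm⟩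
  rw [Nmap, ← Matrix.mul_assoc V X X, ← hint, Matrix.mul_assoc, Matrix.mul_assoc,
    ptE_kron_mul, h1, ← Matrix.mul_assoc]
  rfl

end BSQMC
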